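/- Let X and U be finite nonempty sets, K a positive integer, and L_P, L_Q ≥ 0. Let π = (π_k)_{k∈[K]} be decision rules π_k : X × P(X×[K]) → P(U) with |π_k(x,μ₁) − π_k(x,μ₂)|₁ ≤ L_Q·|μ₁ − μ₂|₁ for all x, k, μ₁, μ₂. Let P_k : X × U × P(X×[K]) × P(U×[K]) → P(X) (k ∈ [K]) satisfy |P_k(x,u,μ₁,ν₁) − P_k(x,u,μ₂,ν₂)|₁ ≤ L_P·(|μ₁ − μ₂|₁ + |ν₁ − ν₂|₁) for all arguments. Define ν^MF(μ,π)(u,k) = Σ_{x∈X} π_k(x,μ)(u)·μ(x,k) and P^MF(μ,π) ∈ P(X×[K]) by P^MF(μ,π)(x',k) = Σ_{x∈X} Σ_{u∈U} μ(x,k)·π_k(x,μ)(u)·P_k(x,u,μ,ν^MF(μ,π))(x'). Then for all μ, μ' ∈ P(X×[K]), |P^MF(μ,π) − P^MF(μ',π)|₁ ≤ S_P·|μ − μ'|₁, where S_P = (1+L_Q) + L_P·(2+L_Q). -/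
import Mathlib

open Finset

/-- A probability distribution on a finite type, represented as a nonnegative
function summing to one. -/
def IsProb {A : Type*} [Fintype A] (μ : A → ℝ) : Prop :=
  (∀ a, 0 ≤ μ a) ∧ ∑ a, μ a = 1

/-- The L1 distance between two real-valued functions on a finite type. -/
noncomputable def l1 {A : Type*} [Fintype A] (μ ν : A → ℝ) : ℝ :=
  ∑ a, |μ a - ν a|

lemma sum_rot3 {A B C : Type*} [Fintype A] [Fintype B] [Fintype C]
    (f : A → B → C → ℝ) :
    ∑ a, ∑ b, ∑ c, f a b c = ∑ b, ∑ c, ∑ a, f a b c := by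
  rw [Finset.sum_comm]
  exact Finset.sum_congr rfl fun b _ => by rw [Finset.sum_comm]

lemma sum_rot4 {A B C D : Type*} [Fintype A] [Fintype B] [Fintype C] [Fintype D]
    (f : A → B → C → D → ℝ) :
    ∑ a, ∑ b, ∑ c, ∑ d, f a b c d = ∑ b, ∑ c, ∑ d, ∑ a, f a b c d := by
  rw [Finset.sum_comm]
  refine Finset.sum_congr rfl fun b _ => ?_
  rw [Finset.sum_comm]
  refine Finset.sum_congr rfl fun c _ => ?_
  rw [Finset.sum_comm]

lemma pair_bound (a a' b b' : ℝ) (ha : 0 ≤ a) (hb' : 0 ≤ b') :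
    |a * b - a' * b'| ≤ a * |b - b'| + |a - a'| * b' := by
  have h : a * b - a' * b' = a * (b - b') + (a - a') * b' := by ring
  calc |a * b - a' * b'| ≤ |a * (b - b')| + |(a - a') * b'| := by
        rw [h]; exact abs_add_le _ _
    _ = a * |b - b'| + |a - a'| * b' := by
        simp only [abs_mul, abs_of_nonneg ha, abs_of_nonneg hb']

lemma triple_bound (a a' b b' c c' : ℝ) (hb : 0 ≤ b) (hc : 0 ≤ c) (ha' : 0 ≤ a')
    (hb' : 0 ≤ b') :
    |a * b * c - a' * b' * c'| ≤
      |a - a'| * b * c + a' * (|b - b'| * c) + a' * (b' * |c - c'|) := by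
  have h : a * b * c - a' * b' * c' =
      (a - a') * b * c + a' * ((b - b') * c) + a' * (b' * (c - c')) := by ring
  calc |a * b * c - a' * b' * c'|
      ≤ |(a - a') * b * c| + |a' * ((b - b') * c)| + |a' * (b' * (c - c'))| := by
        rw [h]; exact abs_add_three _ _ _
    _ = |a - a'| * b * c + a' * (|b - b'| * c) + a' * (b' * |c - c'|) := by
        simp only [abs_mul, abs_of_nonneg hb, abs_of_nonneg hc, abs_of_nonneg ha',
          abs_of_nonneg hb']

lemma sum_mul_prob {A : Type*} [Fintype A] (c : ℝ) (f : A → ℝ) (hf : ∑ a, f a = 1) :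
    ∑ a, c * f a = c := by rw [← Finset.mul_sum, hf, mul_one]

lemma sum_prob_mul {A : Type*} [Fintype A] (c : ℝ) (f : A → ℝ) (hf : ∑ a, f a = 1) :
    ∑ a, f a * c = c := by rw [← Finset.sum_mul, hf, one_mul]

lemma sum_mul_mul_prob {A : Type*} [Fintype A] (c d : ℝ) (f : A → ℝ)
    (hf : ∑ a, f a = 1) : ∑ a, c * (d * f a) = c * d := by
  have h : ∀ a, c * (d * f a) = (c * d) * f a := fun a => by ring
  simp only [h]
  exact sum_mul_prob _ _ hf

lemma sum_mul_prob_mul {A : Type*} [Fintype A] (c e : ℝ) (f : A → ℝ)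
    (hf : ∑ a, f a = 1) : ∑ a, c * (f a * e) = c * e := by
  have h : ∀ a, c * (f a * e) = (c * e) * f a := fun a => by ring
  simp only [h]
  exact sum_mul_prob _ _ hf

lemma sum_swap_prod {A B : Type*} [Fintype A] [Fintype B] (m : A × B → ℝ) :
    ∑ b, ∑ a, m (a, b) = ∑ p, m p := by
  rw [Fintype.sum_prod_type, Finset.sum_comm]

set_option maxHeartbeats 1000000 in
theorem stmt2
    {X U : Type*} [Fintype X] [Fintype U] [Nonempty X] [Nonempty U]
    (K : ℕ) (hK : 0 < K)
    (LP LQ : ℝ) (hLP : 0 ≤ LP) (hLQ : 0 ≤ LQ)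
    (pi : Fin K → X → (X × Fin K → ℝ) → U → ℝ)
    (hpiProb : ∀ k x μ, IsProb μ → IsProb (pi k x μ))
    (hpiLip : ∀ k x μ₁ μ₂, IsProb μ₁ → IsProb μ₂ →
      l1 (pi k x μ₁) (pi k x μ₂) ≤ LQ * l1 μ₁ μ₂)
    (Pk : Fin K → X → U → (X × Fin K → ℝ) → (U × Fin K → ℝ) → X → ℝ)
    (hPkProb : ∀ k x u μ ν, IsProb μ → IsProb ν → IsProb (Pk k x u μ ν))
    (hPkLip : ∀ k x u μ₁ ν₁ μ₂ ν₂, IsProb μ₁ → IsProb ν₁ → IsProb μ₂ → IsProb ν₂ →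
      l1 (Pk k x u μ₁ ν₁) (Pk k x u μ₂ ν₂) ≤ LP * (l1 μ₁ μ₂ + l1 ν₁ ν₂))
    (nuMF : (X × Fin K → ℝ) → U × Fin K → ℝ)
    (hnuMF : nuMF = fun μ q => ∑ x, pi q.2 x μ q.1 * μ (x, q.2))
    (PMFmu : (X × Fin K → ℝ) → X × Fin K → ℝ)
    (hPMFmu : PMFmu = fun μ p =>
      ∑ x, ∑ u, μ (x, p.2) * pi p.2 x μ u * Pk p.2 x u μ (nuMF μ) p.1)
    (μ μ' : X × Fin K → ℝ) (hμ : IsProb μ) (hμ' : IsProb μ') :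
    l1 (PMFmu μ) (PMFmu μ') ≤ ((1 + LQ) + LP * (2 + LQ)) * l1 μ μ' := by
  obtain ⟨hμ0, hμ1⟩ := hμ
  obtain ⟨hμ'0, hμ'1⟩ := hμ'
  have hμP : IsProb μ := ⟨hμ0, hμ1⟩
  have hμ'P : IsProb μ' := ⟨hμ'0, hμ'1⟩
  set ν : U × Fin K → ℝ := nuMF μ with hν_def
  set ν' : U × Fin K → ℝ := nuMF μ' with hν'_def
  have hνeq : ∀ q : U × Fin K, ν q = ∑ x, pi q.2 x μ q.1 * μ (x, q.2) := by
    intro q; rw [hν_def, hnuMF]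
  have hν'eq : ∀ q : U × Fin K, ν' q = ∑ x, pi q.2 x μ' q.1 * μ' (x, q.2) := by
    intro q; rw [hν'_def, hnuMF]
  set d : ℝ := l1 μ μ' with hd_def
  have hd0 : 0 ≤ d := Finset.sum_nonneg fun p _ => abs_nonneg _
  -- basic facts about pi
  have hπ0 : ∀ k x u, 0 ≤ pi k x μ u := fun k x u => (hpiProb k x μ hμP).1 u
  have hπ'0 : ∀ k x u, 0 ≤ pi k x μ' u := fun k x u => (hpiProb k x μ' hμ'P).1 u
  have hπ1 : ∀ k x, ∑ u, pi k x μ u = 1 := fun k x => (hpiProb k x μ hμP).2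
  have hπ'1 : ∀ k x, ∑ u, pi k x μ' u = 1 := fun k x => (hpiProb k x μ' hμ'P).2
  have hπLip : ∀ k x, ∑ u, |pi k x μ u - pi k x μ' u| ≤ LQ * d :=
    fun k x => hpiLip k x μ μ' hμP hμ'P
  -- ν and ν' are probabilities
  have hνProb : IsProb ν := by
    constructor
    · intro q
      rw [hνeq]
      exact Finset.sum_nonneg fun x _ => mul_nonneg (hπ0 _ _ _) (hμ0 _)
    · calc ∑ q : U × Fin K, ν q = ∑ u, ∑ k, ν (u, k) := by rw [Fintype.sum_prod_type]
        _ = ∑ u, ∑ k, ∑ x, pi k x μ u * μ (x, k) := by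
            exact Finset.sum_congr rfl fun u _ => Finset.sum_congr rfl fun k _ =>
              hνeq (u, k)
        _ = ∑ k, ∑ x, ∑ u, pi k x μ u * μ (x, k) := sum_rot3 _
        _ = ∑ k, ∑ x, μ (x, k) := by
            refine Finset.sum_congr rfl fun k _ => Finset.sum_congr rfl fun x _ => ?_
            exact sum_prob_mul _ _ (hπ1 k x)
        _ = ∑ p, μ p := sum_swap_prod μ
        _ = 1 := hμ1
  have hν'Prob : IsProb ν' := by
    constructor
    · intro q
      rw [hν'eq]
      exact Finset.sum_nonneg fun x _ => mul_nonneg (hπ'0 _ _ _) (hμ'0 _)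
    · calc ∑ q : U × Fin K, ν' q = ∑ u, ∑ k, ν' (u, k) := by rw [Fintype.sum_prod_type]
        _ = ∑ u, ∑ k, ∑ x, pi k x μ' u * μ' (x, k) := by
            exact Finset.sum_congr rfl fun u _ => Finset.sum_congr rfl fun k _ =>
              hν'eq (u, k)
        _ = ∑ k, ∑ x, ∑ u, pi k x μ' u * μ' (x, k) := sum_rot3 _
        _ = ∑ k, ∑ x, μ' (x, k) := by
            refine Finset.sum_congr rfl fun k _ => Finset.sum_congr rfl fun x _ => ?_
            exact sum_prob_mul _ _ (hπ'1 k x)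
        _ = ∑ p, μ' p := sum_swap_prod μ'
        _ = 1 := hμ'1
  -- Lipschitz bound for ν
  have hνLip : l1 ν ν' ≤ (1 + LQ) * d := by
    have key : l1 ν ν' ≤
        (∑ k, ∑ x, ∑ u, pi k x μ u * |μ (x, k) - μ' (x, k)|) +
        (∑ k, ∑ x, ∑ u, |pi k x μ u - pi k x μ' u| * μ' (x, k)) := by
      calc l1 ν ν' = ∑ u, ∑ k, |ν (u, k) - ν' (u, k)| := by
            simp only [l1, Fintype.sum_prod_type]
        _ ≤ ∑ u, ∑ k, ∑ x, (pi k x μ u * |μ (x, k) - μ' (x, k)| +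
              |pi k x μ u - pi k x μ' u| * μ' (x, k)) := by
            refine Finset.sum_le_sum fun u _ => Finset.sum_le_sum fun k _ => ?_
            rw [hνeq, hν'eq, ← Finset.sum_sub_distrib]
            refine (Finset.abs_sum_le_sum_abs _ _).trans ?_
            refine Finset.sum_le_sum fun x _ => ?_
            exact pair_bound _ _ _ _ (hπ0 k x u) (hμ'0 (x, k))
        _ = ∑ k, ∑ x, ∑ u, (pi k x μ u * |μ (x, k) - μ' (x, k)| +
              |pi k x μ u - pi k x μ' u| * μ' (x, k)) := sum_rot3 _
        _ = _ := by
            simp only [Finset.sum_add_distrib]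
    have t1 : ∑ k, ∑ x, ∑ u, pi k x μ u * |μ (x, k) - μ' (x, k)| = d := by
      calc ∑ k, ∑ x, ∑ u, pi k x μ u * |μ (x, k) - μ' (x, k)|
          = ∑ k, ∑ x, |μ (x, k) - μ' (x, k)| := by
            refine Finset.sum_congr rfl fun k _ => Finset.sum_congr rfl fun x _ => ?_
            exact sum_prob_mul _ _ (hπ1 k x)
        _ = ∑ p : X × Fin K, |μ p - μ' p| := sum_swap_prod (fun p => |μ p - μ' p|)
        _ = d := rfl
    have t2 : ∑ k, ∑ x, ∑ u, |pi k x μ u - pi k x μ' u| * μ' (x, k) ≤ LQ * d := by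
      calc ∑ k, ∑ x, ∑ u, |pi k x μ u - pi k x μ' u| * μ' (x, k)
          = ∑ k, ∑ x, (∑ u, |pi k x μ u - pi k x μ' u|) * μ' (x, k) := by
            simp only [Finset.sum_mul]
        _ ≤ ∑ k, ∑ x, (LQ * d) * μ' (x, k) := by
            refine Finset.sum_le_sum fun k _ => Finset.sum_le_sum fun x _ => ?_
            exact mul_le_mul_of_nonneg_right (hπLip k x) (hμ'0 (x, k))
        _ = LQ * d := by
            rw [show ∑ k, ∑ x, (LQ * d) * μ' (x, k)
                = (LQ * d) * ∑ k, ∑ x, μ' (x, k) by simp only [Finset.mul_sum],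
              sum_swap_prod μ', hμ'1, mul_one]
    calc l1 ν ν' ≤ d + LQ * d := key.trans (by linarith)
      _ = (1 + LQ) * d := by ring
  -- facts about Pk
  have hP0 : ∀ k x u x', 0 ≤ Pk k x u μ ν x' :=
    fun k x u x' => (hPkProb k x u μ ν hμP hνProb).1 x'
  have hP1 : ∀ k x u, ∑ x', Pk k x u μ ν x' = 1 :=
    fun k x u => (hPkProb k x u μ ν hμP hνProb).2
  have hP'1 : ∀ k x u, ∑ x', Pk k x u μ' ν' x' = 1 :=
    fun k x u => (hPkProb k x u μ' ν' hμ'P hν'Prob).2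
  have hPLip : ∀ k x u, ∑ x', |Pk k x u μ ν x' - Pk k x u μ' ν' x'| ≤
      LP * (2 + LQ) * d := by
    intro k x u
    calc ∑ x', |Pk k x u μ ν x' - Pk k x u μ' ν' x'|
        ≤ LP * (l1 μ μ' + l1 ν ν') := hPkLip k x u μ ν μ' ν' hμP hνProb hμ'P hν'Prob
      _ ≤ LP * (d + (1 + LQ) * d) := by
          refine mul_le_mul_of_nonneg_left ?_ hLP
          have : l1 μ μ' = d := rfl
          linarith [hνLip]
      _ = LP * (2 + LQ) * d := by ring
  -- main computation
  have main : l1 (PMFmu μ) (PMFmu μ') ≤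
      (∑ k, ∑ x, ∑ u, ∑ x', |μ (x, k) - μ' (x, k)| * pi k x μ u * Pk k x u μ ν x') +
      (∑ k, ∑ x, ∑ u, ∑ x', μ' (x, k) *
        (|pi k x μ u - pi k x μ' u| * Pk k x u μ ν x')) +
      (∑ k, ∑ x, ∑ u, ∑ x', μ' (x, k) *
        (pi k x μ' u * |Pk k x u μ ν x' - Pk k x u μ' ν' x'|)) := by
    have hPM : ∀ m : X × Fin K → ℝ, ∀ p : X × Fin K, PMFmu m p =
        ∑ x, ∑ u, m (x, p.2) * pi p.2 x m u * Pk p.2 x u m (nuMF m) p.1 := by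
      intro m p; rw [hPMFmu]
    calc l1 (PMFmu μ) (PMFmu μ')
        = ∑ x', ∑ k, |PMFmu μ (x', k) - PMFmu μ' (x', k)| := by
            simp only [l1, Fintype.sum_prod_type]
      _ ≤ ∑ x', ∑ k, ∑ x, ∑ u,
            (|μ (x, k) - μ' (x, k)| * pi k x μ u * Pk k x u μ ν x' +
             μ' (x, k) * (|pi k x μ u - pi k x μ' u| * Pk k x u μ ν x') +
             μ' (x, k) * (pi k x μ' u * |Pk k x u μ ν x' - Pk k x u μ' ν' x'|)) := by
          refine Finset.sum_le_sum fun x' _ => Finset.sum_le_sum fun k _ => ?_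
          rw [hPM, hPM, ← hν_def, ← hν'_def, ← Finset.sum_sub_distrib]
          refine (Finset.abs_sum_le_sum_abs _ _).trans ?_
          refine Finset.sum_le_sum fun x _ => ?_
          rw [← Finset.sum_sub_distrib]
          refine (Finset.abs_sum_le_sum_abs _ _).trans ?_
          refine Finset.sum_le_sum fun u _ => ?_
          exact triple_bound _ _ _ _ _ _ (hπ0 k x u) (hP0 k x u x') (hμ'0 (x, k))
            (hπ'0 k x u)
      _ = ∑ k, ∑ x, ∑ u, ∑ x',
            (|μ (x, k) - μ' (x, k)| * pi k x μ u * Pk k x u μ ν x' +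
             μ' (x, k) * (|pi k x μ u - pi k x μ' u| * Pk k x u μ ν x') +
             μ' (x, k) * (pi k x μ' u * |Pk k x u μ ν x' - Pk k x u μ' ν' x'|)) :=
          sum_rot4 _
      _ = _ := by simp only [Finset.sum_add_distrib]
  have T1 : ∑ k, ∑ x, ∑ u, ∑ x',
      |μ (x, k) - μ' (x, k)| * pi k x μ u * Pk k x u μ ν x' = d := by
    calc ∑ k, ∑ x, ∑ u, ∑ x', |μ (x, k) - μ' (x, k)| * pi k x μ u * Pk k x u μ ν x'
        = ∑ k, ∑ x, ∑ u, |μ (x, k) - μ' (x, k)| * pi k x μ u := by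
          refine Finset.sum_congr rfl fun k _ => Finset.sum_congr rfl fun x _ =>
            Finset.sum_congr rfl fun u _ => ?_
          exact sum_mul_prob _ _ (hP1 k x u)
      _ = ∑ k, ∑ x, |μ (x, k) - μ' (x, k)| := by
          refine Finset.sum_congr rfl fun k _ => Finset.sum_congr rfl fun x _ => ?_
          exact sum_mul_prob _ _ (hπ1 k x)
      _ = ∑ p : X × Fin K, |μ p - μ' p| := sum_swap_prod (fun p => |μ p - μ' p|)
      _ = d := rfl
  have T2 : ∑ k, ∑ x, ∑ u, ∑ x', μ' (x, k) *
      (|pi k x μ u - pi k x μ' u| * Pk k x u μ ν x') ≤ LQ * d := by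
    calc ∑ k, ∑ x, ∑ u, ∑ x', μ' (x, k) *
          (|pi k x μ u - pi k x μ' u| * Pk k x u μ ν x')
        = ∑ k, ∑ x, ∑ u, μ' (x, k) * |pi k x μ u - pi k x μ' u| := by
          refine Finset.sum_congr rfl fun k _ => Finset.sum_congr rfl fun x _ =>
            Finset.sum_congr rfl fun u _ => ?_
          exact sum_mul_mul_prob _ _ _ (hP1 k x u)
      _ = ∑ k, ∑ x, μ' (x, k) * ∑ u, |pi k x μ u - pi k x μ' u| := by
          simp only [Finset.mul_sum]
      _ ≤ ∑ k, ∑ x, μ' (x, k) * (LQ * d) := by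
          refine Finset.sum_le_sum fun k _ => Finset.sum_le_sum fun x _ => ?_
          exact mul_le_mul_of_nonneg_left (hπLip k x) (hμ'0 (x, k))
      _ = LQ * d := by
          rw [show ∑ k, ∑ x, μ' (x, k) * (LQ * d)
              = (∑ k, ∑ x, μ' (x, k)) * (LQ * d) by simp only [Finset.sum_mul],
            sum_swap_prod μ', hμ'1, one_mul]
  have T3 : ∑ k, ∑ x, ∑ u, ∑ x', μ' (x, k) *
      (pi k x μ' u * |Pk k x u μ ν x' - Pk k x u μ' ν' x'|) ≤ LP * (2 + LQ) * d := by
    calc ∑ k, ∑ x, ∑ u, ∑ x', μ' (x, k) *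
          (pi k x μ' u * |Pk k x u μ ν x' - Pk k x u μ' ν' x'|)
        = ∑ k, ∑ x, ∑ u, μ' (x, k) *
          (pi k x μ' u * ∑ x', |Pk k x u μ ν x' - Pk k x u μ' ν' x'|) := by
          refine Finset.sum_congr rfl fun k _ => Finset.sum_congr rfl fun x _ =>
            Finset.sum_congr rfl fun u _ => ?_
          simp only [Finset.mul_sum]
      _ ≤ ∑ k, ∑ x, ∑ u, μ' (x, k) * (pi k x μ' u * (LP * (2 + LQ) * d)) := by
          refine Finset.sum_le_sum fun k _ => Finset.sum_le_sum fun x _ =>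
            Finset.sum_le_sum fun u _ => ?_
          exact mul_le_mul_of_nonneg_left
            (mul_le_mul_of_nonneg_left (hPLip k x u) (hπ'0 k x u)) (hμ'0 (x, k))
      _ = ∑ k, ∑ x, μ' (x, k) * (LP * (2 + LQ) * d) := by
          refine Finset.sum_congr rfl fun k _ => Finset.sum_congr rfl fun x _ => ?_
          exact sum_mul_prob_mul _ _ _ (hπ'1 k x)
      _ = LP * (2 + LQ) * d := by
          rw [show ∑ k, ∑ x, μ' (x, k) * (LP * (2 + LQ) * d)
              = (∑ k, ∑ x, μ' (x, k)) * (LP * (2 + LQ) * d) by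
                simp only [Finset.sum_mul],
            sum_swap_prod μ', hμ'1, one_mul]
  calc l1 (PMFmu μ) (PMFmu μ') ≤ _ := main
    _ ≤ d + LQ * d + LP * (2 + LQ) * d := by
        have := T1; linarith [T2, T3]
    _ = ((1 + LQ) + LP * (2 + LQ)) * d := by ring
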